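/- Let r, s be positive integers with rs > 2. Then 2^{rs} < 4⌊2^{2rs}/24⌋ + 4. Consequently, an extremal doubly even self-dual code of length n = 2^{2rs} (minimum weight 4⌊n/24⌋+4) cannot be invariant under the affine group GF(2^r)^{2s} ⋊ SL(2s, GF(2^r)), since that group contains an involution fixing exactly 2^{rs} points. -/
import Mathlib


/-- The dual code of `C` w.r.t. the inner product `(x,y) = ∑ i, x i * y i` over `GF(2)`. -/
def dualCode {Ω : Type*} [Fintype Ω] (C : Submodule (ZMod 2) (Ω → ZMod 2)) :
    Submodule (ZMod 2) (Ω → ZMod 2) where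
  carrier := {y | ∀ x ∈ C, ∑ i, x i * y i = 0}
  zero_mem' := by intro x hx; simp
  add_mem' := by
    intro a b ha hb x hx
    simp [mul_add, Finset.sum_add_distrib, ha x hx, hb x hx]
  smul_mem' := by
    intro c y hy x hx
    simp only [Pi.smul_apply, smul_eq_mul, mul_left_comm, ← Finset.mul_sum]
    rw [hy x hx, mul_zero]

/-- The (Hamming) weight of a vector over `GF(2)`. -/
def wt {Ω : Type*} [Fintype Ω] (x : Ω → ZMod 2) : ℕ :=
  (Finset.univ.filter fun i => x i ≠ 0).card

section AuxExtremal

variable {F : Type} [Field F]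

/-- The unipotent matrix `1 + N` where `N` has ones at `(i, i+s)`. -/
def MmatAux (s : ℕ) : Matrix (Fin (2*s)) (Fin (2*s)) F :=
  1 + (Matrix.of fun i j => if (j : ℕ) = (i : ℕ) + s then (1:F) else 0
        : Matrix (Fin (2*s)) (Fin (2*s)) F)

lemma MmatAux_mulVec (s : ℕ) (v : Fin (2*s) → F) (i : Fin (2*s)) :
    (MmatAux s).mulVec v i
      = v i + if h : (i : ℕ) + s < 2*s then v ⟨(i:ℕ)+s, h⟩ else 0 := by
  unfold MmatAux
  rw [Matrix.add_mulVec, Pi.add_apply, Matrix.one_mulVec]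
  congr 1
  unfold Matrix.mulVec dotProduct
  simp only [Matrix.of_apply, ite_mul, one_mul, zero_mul]
  split
  · next h =>
    rw [Finset.sum_eq_single (⟨(i:ℕ)+s, h⟩ : Fin (2*s))]
    · simp
    · intro b _ hb; rw [if_neg]; intro hb'; exact hb (Fin.ext hb')
    · simp
  · next h =>
    apply Finset.sum_eq_zero
    intro j _
    rw [if_neg]
    intro hj
    exact h (hj ▸ j.isLt)

lemma MmatAux_det (s : ℕ) (hs : 0 < s) : (MmatAux s (F := F)).det = 1 := by
  have h : (MmatAux s (F := F)).BlockTriangular id := by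
    intro i j hij
    have hij' : (j : ℕ) < (i : ℕ) := hij
    unfold MmatAux
    simp only [Matrix.add_apply, Matrix.one_apply, Matrix.of_apply]
    rw [if_neg, if_neg]
    · ring
    · omega
    · intro hc; rw [hc] at hij'; omega
  rw [Matrix.det_of_upperTriangular h]
  apply Finset.prod_eq_one
  intro i _
  unfold MmatAux
  simp only [Matrix.add_apply, Matrix.one_apply_eq, Matrix.of_apply]
  rw [if_neg (by omega)]
  ring

lemma MmatAux_invol (s : ℕ) (hs : 0 < s) (h2 : ∀ a : F, a + a = 0)
    (v : Fin (2*s) → F) : (MmatAux s).mulVec ((MmatAux s).mulVec v) = v := by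
  funext i
  simp only [MmatAux_mulVec]
  split
  · next h =>
    rw [dif_neg ?_]
    · rw [add_zero, add_assoc, h2, add_zero]
    · omega
  · next h =>
    rw [add_zero, add_zero]

lemma MmatAux_fix_iff (s : ℕ) (hs : 0 < s) (v : Fin (2*s) → F) :
    (MmatAux s).mulVec v = v ↔ ∀ j : Fin (2*s), s ≤ (j:ℕ) → v j = 0 := by
  constructor
  · intro hv j hj
    have hi : (j:ℕ) - s < 2*s := by omega
    have hkey := congrFun hv ⟨(j:ℕ)-s, hi⟩
    rw [MmatAux_mulVec, dif_pos (by simp only [Fin.val_mk]; omega)] at hkey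
    have hval : ((⟨(j:ℕ)-s, hi⟩ : Fin (2*s)) : ℕ) + s = (j : ℕ) := by
      simp only [Fin.val_mk]; omega
    have hidx : (⟨((⟨(j:ℕ)-s, hi⟩ : Fin (2*s)) : ℕ) + s, by omega⟩ : Fin (2*s)) = j :=
      Fin.ext hval
    rw [hidx] at hkey
    exact (add_eq_left).mp hkey
  · intro hv
    funext i
    rw [MmatAux_mulVec]
    split
    · next h =>
      rw [hv ⟨(i:ℕ)+s, h⟩ (by simp only [Fin.val_mk]; omega), add_zero]
    · rw [add_zero]

def fixPred (s : ℕ) (v : Fin (2*s) → F) : Prop :=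
  ∀ j : Fin (2*s), s ≤ (j:ℕ) → v j = 0

open Classical in
lemma card_fixSet (s : ℕ) [Fintype F] :
    Fintype.card {v : Fin (2*s) → F // fixPred s v}
      = Fintype.card F ^ s := by
  have e : {v : Fin (2*s) → F // fixPred s v} ≃ (Fin s → F) :=
    { toFun := fun v k => v.1 ⟨(k:ℕ), by omega⟩
      invFun := fun g => ⟨fun j => if h : (j:ℕ) < s then g ⟨(j:ℕ), h⟩ else 0,
        fun j hj => dif_neg (by omega)⟩
      left_inv := fun v => by
        ext j
        dsimp
        split
        · next h => rfl
        · next h => exact (v.2 j (by omega)).symm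
      right_inv := fun g => by
        ext k
        dsimp
        simp [k.2] }
  refine Eq.trans (Fintype.card_congr e) ?_
  rw [Fintype.card_fun, Fintype.card_fin]

lemma arith_extremal (m : ℕ) (h : 2 < m) :
    2 ^ m < 4 * (2 ^ (2 * m) / 24) + 4 := by
  have hk : 8 ≤ 2 ^ m := by
    calc (8:ℕ) = 2 ^ 3 := rfl
      _ ≤ 2 ^ m := Nat.pow_le_pow_right (by norm_num) h
  set k := 2 ^ m with hkdef
  have h2 : 2 ^ (2 * m) = k * k := by rw [two_mul, pow_add]
  rw [h2]
  have hkk : 8 * k ≤ k * k := Nat.mul_le_mul_right k hk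
  have hd := Nat.div_add_mod (k * k) 24
  have hm : k * k % 24 < 24 := Nat.mod_lt _ (by norm_num)
  omega

lemma zmod2_mul_self : ∀ a : ZMod 2, a * a = a := by decide

lemma zmod2_add_self : ∀ a : ZMod 2, a + a = 0 := by decide

end AuxExtremal

lemma mem_dualCode {Ω : Type*} [Fintype Ω] (C : Submodule (ZMod 2) (Ω → ZMod 2))
    (y : Ω → ZMod 2) : y ∈ dualCode C ↔ ∀ x ∈ C, ∑ i, x i * y i = 0 := Iff.rfl

/-- For `rs > 2` one has `2^(rs) < 4⌊2^(2rs)/24⌋ + 4`; consequently no extremal doubly even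
self-dual code of length `2^(2rs)` is invariant under the affine group
`GF(2^r)^(2s) ⋊ SL(2s, GF(2^r))`. -/
theorem extremal_not_affine_invariant (r s : ℕ) (hr : 0 < r) (hs : 0 < s) (h : 2 < r * s) :
    2 ^ (r * s) < 4 * (2 ^ (2 * (r * s)) / 24) + 4 ∧
    ∀ (F : Type) (_ : Field F) (_ : Fintype F), Fintype.card F = 2 ^ r →
      ∀ C : Submodule (ZMod 2) ((Fin (2 * s) → F) → ZMod 2),
        dualCode C = C →
        (∀ x ∈ C, 4 ∣ wt x) →
        (∀ x ∈ C, x ≠ 0 → 4 * (2 ^ (2 * (r * s)) / 24) + 4 ≤ wt x) →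
        (∃ x ∈ C, x ≠ 0 ∧ wt x = 4 * (2 ^ (2 * (r * s)) / 24) + 4) →
        (∀ t : Fin (2 * s) → F, ∀ x ∈ C, (fun v => x (v + t)) ∈ C) →
        (∀ A : Matrix.SpecialLinearGroup (Fin (2 * s)) F, ∀ x ∈ C,
          (fun v => x ((A : Matrix (Fin (2*s)) (Fin (2*s)) F).mulVec v)) ∈ C) →
        False := by
  refine ⟨arith_extremal (r*s) h, ?_⟩
  intro F _ _ hF C hdual _hdiv hmin _hext _htrans hSL
  classical
  -- F has characteristic 2
  have hchar : ∀ a : F, a + a = 0 := by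
    obtain ⟨n, hp, hc⟩ := FiniteField.card F (ringChar F)
    have hp2 : ringChar F = 2 := by
      have hdvd : ringChar F ∣ 2 ^ r := by
        rw [← hF, hc]; exact dvd_pow_self _ n.pos.ne'
      have := hp.dvd_of_dvd_pow (n := r) hdvd
      exact (Nat.prime_dvd_prime_iff_eq hp Nat.prime_two).mp this
    haveI : CharP F 2 := by rw [← hp2]; exact ringChar.charP F
    exact fun a => CharTwo.add_self_eq_zero a
  set M : Matrix (Fin (2*s)) (Fin (2*s)) F := MmatAux s with hM
  have hinvol : ∀ v, M.mulVec (M.mulVec v) = v := MmatAux_invol s hs hchar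
  let y : (Fin (2*s) → F) → ZMod 2 := fun v => if fixPred s v then 1 else 0
  have hyapp : ∀ v, y v = if fixPred s v then 1 else 0 := fun v => rfl
  -- y is in the dual code, hence in C
  have hyC : y ∈ C := by
    rw [← hdual, mem_dualCode]
    intro x hx
    have hxy : ∑ v, x v * y v = ∑ v ∈ Finset.univ.filter (fixPred s), x v := by
      rw [Finset.sum_filter]
      apply Finset.sum_congr rfl
      intro v _
      rw [hyapp]
      by_cases hv : fixPred s v
      · rw [if_pos hv, if_pos hv, mul_one]
      · rw [if_neg hv, if_neg hv, mul_zero]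
    have hx' : (fun v => x (M.mulVec v)) ∈ C :=
      hSL ⟨M, MmatAux_det s hs⟩ x hx
    have h0 : ∑ v, x v * x (M.mulVec v) = 0 := by
      rw [← hdual, mem_dualCode] at hx'
      exact hx' x hx
    have hsplit := Finset.sum_filter_add_sum_filter_not Finset.univ
      (fun v => M.mulVec v = v) (fun v => x v * x (M.mulVec v))
    have hmoved : ∑ v ∈ Finset.univ.filter (fun v => ¬ M.mulVec v = v),
        x v * x (M.mulVec v) = 0 := by
      refine Finset.sum_involution (fun a _ => M.mulVec a) ?_ ?_ ?_ ?_
      · intro a _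
        rw [hinvol a, mul_comm]
        exact zmod2_add_self _
      · intro a ha _
        exact (Finset.mem_filter.mp ha).2
      · intro a ha
        rw [Finset.mem_filter]
        refine ⟨Finset.mem_univ _, ?_⟩
        intro hcon
        have h1 := hinvol a
        rw [hcon] at h1
        exact (Finset.mem_filter.mp ha).2 h1
      · intro a _
        exact hinvol a
    have hfilter : Finset.univ.filter (fun v => M.mulVec v = v)
        = Finset.univ.filter (fixPred s) :=
      Finset.filter_congr (fun v _ => MmatAux_fix_iff s hs v)
    have hfix : ∑ v ∈ Finset.univ.filter (fun v => M.mulVec v = v),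
        x v * x (M.mulVec v) = ∑ v ∈ Finset.univ.filter (fixPred s), x v := by
      rw [Finset.sum_congr rfl (fun v hv => ?_), hfilter]
      have hfv : M.mulVec v = v := (Finset.mem_filter.mp hv).2
      rw [hfv, zmod2_mul_self]
    rw [hmoved, add_zero, h0, hfix] at hsplit
    rw [hxy, hsplit]
  -- y is nonzero
  have hy0 : y ≠ 0 := by
    intro hcon
    have h1 : y 0 = 1 := by
      rw [hyapp]
      exact if_pos (fun j hj => rfl)
    rw [hcon] at h1
    exact one_ne_zero h1.symm
  -- weight of y
  have hwt : wt y = 2 ^ (r * s) := by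
    unfold wt
    have hfe : (Finset.univ.filter fun v => y v ≠ 0)
        = Finset.univ.filter (fixPred s) := by
      apply Finset.filter_congr
      intro v _
      rw [hyapp]
      by_cases hv : fixPred s v
      · simp [hv]
      · simp [hv]
    rw [hfe, ← Fintype.card_subtype, card_fixSet s, hF, ← pow_mul]
  have hge := hmin y hyC hy0
  have hlt := arith_extremal (r*s) h
  rw [hwt] at hge
  omega
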